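/- Let E, F be Banach spaces and T : E → F a bounded operator. Define the residuum operator T^co : E**/E → F**/F by T^co(x + E) = T**(x) + F for x ∈ E**. Then T^co is well defined, linear, bounded with ‖T^co‖ ≤ ‖T‖, and T^co = 0 if and only if T is weakly compact. -/

import Mathlib

open NormedSpace

/-- An operator between normed spaces is weakly compact if the image of the closed unit
ball is contained in a weakly compact set. -/
def IsWeaklyCompactOperator {E F : Type*} [NormedAddCommGroup E] [NormedSpace ℝ E]
    [NormedAddCommGroup F] [NormedSpace ℝ F] (T : E →L[ℝ] F) : Prop :=
  ∃ C : Set (WeakSpace ℝ F), IsCompact C ∧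
    ∀ x ∈ Metric.closedBall (0 : E) 1, toWeakSpace ℝ F (T x) ∈ C

/-- The double adjoint `T** : E** → F**` of a bounded operator `T : E → F`. -/
noncomputable def bidualMap {E F : Type*} [NormedAddCommGroup E] [NormedSpace ℝ E]
    [NormedAddCommGroup F] [NormedSpace ℝ F] (T : E →L[ℝ] F) :
    StrongDual ℝ (StrongDual ℝ E) →L[ℝ] StrongDual ℝ (StrongDual ℝ F) :=
  (ContinuousLinearMap.compL ℝ (StrongDual ℝ F) (StrongDual ℝ E) ℝ).flip
    ((ContinuousLinearMap.compL ℝ E F ℝ).flip T)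

noncomputable instance instSeminormedAddCommGroupBidual (E : Type*) [NormedAddCommGroup E]
    [NormedSpace ℝ E] : SeminormedAddCommGroup (StrongDual ℝ (StrongDual ℝ E)) :=
  inferInstance

noncomputable instance instNormedSpaceBidual (E : Type*) [NormedAddCommGroup E]
    [NormedSpace ℝ E] : NormedSpace ℝ (StrongDual ℝ (StrongDual ℝ E)) :=
  inferInstance

section Auxiliary

open ContinuousLinearMap

variable {E F : Type*} [NormedAddCommGroup E] [NormedSpace ℝ E]
    [NormedAddCommGroup F] [NormedSpace ℝ F]

lemma bidualMap_eq (T : E →L[ℝ] F) (x : StrongDual ℝ (StrongDual ℝ E)) :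
    bidualMap T x = x.comp ((ContinuousLinearMap.compL ℝ E F ℝ).flip T) := rfl

lemma bidualMap_apply' (T : E →L[ℝ] F) (x : StrongDual ℝ (StrongDual ℝ E)) (g : StrongDual ℝ F) :
    bidualMap T x g = x (g.comp T) := rfl

lemma bidualMap_norm_le (T : E →L[ℝ] F) (x : StrongDual ℝ (StrongDual ℝ E)) :
    ‖bidualMap T x‖ ≤ ‖T‖ * ‖x‖ := by
  rw [bidualMap_eq]
  calc ‖x.comp ((compL ℝ E F ℝ).flip T)‖ ≤ ‖x‖ * ‖(compL ℝ E F ℝ).flip T‖ := opNorm_comp_le _ _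
  _ ≤ ‖x‖ * ‖T‖ := by
      gcongr
      refine opNorm_le_bound _ (norm_nonneg T) fun g => ?_
      calc ‖g.comp T‖ ≤ ‖g‖ * ‖T‖ := opNorm_comp_le _ _
      _ = ‖T‖ * ‖g‖ := mul_comm _ _
  _ = ‖T‖ * ‖x‖ := mul_comm _ _

lemma bidualMap_inclusion (T : E →L[ℝ] F) (e : E) :
    bidualMap T (inclusionInDoubleDual ℝ E e) = inclusionInDoubleDual ℝ F (T e) := by
  ext g; rfl

/-- Every weak-star continuous linear functional on a bidual is an evaluation at a point
of the dual. -/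
lemma weakdual_functional_is_eval (φ : WeakDual ℝ (StrongDual ℝ E) →L[ℝ] ℝ) :
    ∃ g : StrongDual ℝ E, ∀ x : StrongDual ℝ (StrongDual ℝ E), φ (StrongDual.toWeakDual x) = x g := by
  classical
  set B := topDualPairing ℝ (StrongDual ℝ E)
  have hp : WithSeminorms
      (LinearMap.toSeminormFamily B : StrongDual ℝ E → Seminorm ℝ (WeakDual ℝ (StrongDual ℝ E))) :=
    B.weakBilin_withSeminorms
  set q : Seminorm ℝ (WeakDual ℝ (StrongDual ℝ E)) := LinearMap.toSeminorm (φ : _ →ₗ[ℝ] ℝ) with hq_def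
  have hq : Continuous q := by
    have : Continuous fun x : WeakDual ℝ (StrongDual ℝ E) => ‖φ x‖ := φ.continuous.norm
    exact this
  obtain ⟨s, C, -, hbound⟩ := Seminorm.bound_of_continuous hp q hq
  -- the evaluation functionals
  let L : s → (WeakDual ℝ (StrongDual ℝ E)) →ₗ[ℝ] ℝ := fun i => B.flip i
  have hker : ⨅ i, LinearMap.ker (L i) ≤ LinearMap.ker (φ : _ →ₗ[ℝ] ℝ) := by
    intro x hx
    simp only [Submodule.mem_iInf, LinearMap.mem_ker] at hx
    have hsup : (s.sup (LinearMap.toSeminormFamily B)) x ≤ 0 := by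
      refine Seminorm.finset_sup_apply_le le_rfl fun i hi => ?_
      have := hx ⟨i, hi⟩
      show ‖(B x) i‖ ≤ 0
      rw [show (B x) i = (L ⟨i, hi⟩) x from rfl, this, norm_zero]
    have hsup0 : (s.sup (LinearMap.toSeminormFamily B)) x = 0 :=
      le_antisymm hsup (apply_nonneg _ _)
    have h1 : q x ≤ C • (s.sup (LinearMap.toSeminormFamily B)) x := Seminorm.le_def.mp hbound x
    rw [hsup0, smul_zero] at h1
    have : ‖φ x‖ ≤ 0 := h1
    simpa using norm_le_zero_iff.mp this
  have hspan := mem_span_of_iInf_ker_le_ker (𝕜 := ℝ) (E := WeakDual ℝ (StrongDual ℝ E)) hker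
  obtain ⟨c, hc⟩ := (Submodule.mem_span_range_iff_exists_fun (R := ℝ)).1 hspan
  refine ⟨∑ i : s, c i • (i : StrongDual ℝ E), fun x => ?_⟩
  have := congrFun (congrArg (fun (f : (WeakDual ℝ (StrongDual ℝ E)) →ₗ[ℝ] ℝ) => (f : _ → ℝ)) hc)
    (StrongDual.toWeakDual x)
  simp only [LinearMap.coe_sum, Finset.sum_apply, LinearMap.smul_apply] at this
  rw [show φ (StrongDual.toWeakDual x) = (φ : _ →ₗ[ℝ] ℝ) (StrongDual.toWeakDual x) from rfl, ← this]
  rw [map_sum]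
  refine Finset.sum_congr rfl fun i _ => ?_
  simp only [map_smul, smul_eq_mul]
  rfl

/-- The canonical inclusion of a space into its bidual equipped with the weak-star topology. -/
noncomputable def inclWeak (E : Type*) [NormedAddCommGroup E] [NormedSpace ℝ E] :
    E →ₗ[ℝ] WeakDual ℝ (StrongDual ℝ E) :=
  (StrongDual.toWeakDual.toLinearMap).comp (inclusionInDoubleDual ℝ E).toLinearMap

/-- **Goldstine's theorem**: the unit ball of a space is weak-star dense in the unit
ball of its bidual. -/
lemma goldstine (x : StrongDual ℝ (StrongDual ℝ E)) (hx : ‖x‖ ≤ 1) :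
    StrongDual.toWeakDual x ∈ closure (inclWeak E '' Metric.closedBall (0 : E) 1) := by
  by_contra h
  have hLCS : LocallyConvexSpace ℝ (WeakDual ℝ (StrongDual ℝ E)) :=
    (WeakDual.withSeminorms ℝ (StrongDual ℝ E)).toLocallyConvexSpace
  have hconv : Convex ℝ (closure (inclWeak E '' Metric.closedBall (0 : E) 1)) :=
    Convex.closure (𝕜 := ℝ) (E := WeakDual ℝ (StrongDual ℝ E))
      ((convex_closedBall (0 : E) 1).linear_image (inclWeak E))
  obtain ⟨f, u, hfS, hfx⟩ := geometric_hahn_banach_closed_point hconv isClosed_closure h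
  obtain ⟨g, hg⟩ := weakdual_functional_is_eval f
  have hu : 0 < u := by
    have h0 : (0 : WeakDual ℝ (StrongDual ℝ E)) ∈ inclWeak E '' Metric.closedBall (0 : E) 1 :=
      ⟨0, by simp, by simp⟩
    have := hfS 0 (subset_closure h0)
    simpa using this
  have hball : ∀ e : E, e ∈ Metric.closedBall (0 : E) 1 → g e < u := by
    intro e he
    have := hfS (inclWeak E e) (subset_closure ⟨e, he, rfl⟩)
    have heq : f (inclWeak E e) = g e := by
      have := hg (inclusionInDoubleDual ℝ E e)
      simpa [inclWeak] using this
    rwa [heq] at this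
  have hgu : ‖g‖ ≤ u := by
    refine opNorm_le_of_unit_norm hu.le fun e he => ?_
    have h1 : g e < u := hball e (by simp [he])
    have h2 : g (-e) < u := hball (-e) (by simp [he])
    rw [map_neg] at h2
    rw [Real.norm_eq_abs, abs_le]
    constructor <;> linarith
  have hfxval : f (StrongDual.toWeakDual x) = x g := hg x
  have : x g ≤ u := by
    calc x g ≤ ‖x g‖ := le_abs_self _
    _ ≤ ‖x‖ * ‖g‖ := x.le_opNorm g
    _ ≤ 1 * u := by
        apply mul_le_mul hx hgu (norm_nonneg g) zero_le_one
    _ = u := one_mul u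
  rw [hfxval] at hfx
  linarith

/-- One direction of **Gantmacher's theorem**: if `T` is weakly compact then `T**` maps the
bidual of `E` into the canonical copy of `F`. -/
lemma range_of_weaklyCompact (T : E →L[ℝ] F) (hT : IsWeaklyCompactOperator T)
    (x : StrongDual ℝ (StrongDual ℝ E)) :
    bidualMap T x ∈ LinearMap.range (inclusionInDoubleDual ℝ F).toLinearMap := by
  obtain ⟨C, hC, hTC⟩ := hT
  -- the canonical map WeakSpace F → WeakDual (StrongDual F)
  let Φ : WeakSpace ℝ F → WeakDual ℝ (StrongDual ℝ F) := fun y =>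
    StrongDual.toWeakDual (inclusionInDoubleDual ℝ F ((toWeakSpace ℝ F).symm y))
  have hΦ : Continuous Φ := by
    apply WeakDual.continuous_of_continuous_eval
    intro g
    exact WeakBilin.eval_continuous ((topDualPairing ℝ F).flip) g
  have hK : IsCompact (Φ '' C) := hC.image hΦ
  have hKclosed : IsClosed (Φ '' C) := hK.isClosed
  -- T** as a weak*-weak* continuous map
  let Ψ : WeakDual ℝ (StrongDual ℝ E) → WeakDual ℝ (StrongDual ℝ F) := fun z =>
    StrongDual.toWeakDual (bidualMap T (StrongDual.toWeakDual.symm z))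
  have hΨ : Continuous Ψ := by
    apply WeakDual.continuous_of_continuous_eval
    intro g
    have heq : (fun z : WeakDual ℝ (StrongDual ℝ E) => Ψ z g) = fun z => z (g.comp T) := by
      funext z
      show bidualMap T (StrongDual.toWeakDual.symm z) g = _
      rw [bidualMap_apply']
      rfl
    rw [show (fun z : WeakDual ℝ (StrongDual ℝ E) => (Ψ z) g) = fun z => z (g.comp T) from heq]
    exact WeakDual.eval_continuous (g.comp T)
  -- main claim for norm ≤ 1
  have key : ∀ x : StrongDual ℝ (StrongDual ℝ E), ‖x‖ ≤ 1 →
      bidualMap T x ∈ LinearMap.range (inclusionInDoubleDual ℝ F).toLinearMap := by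
    intro x hx
    have hmem := goldstine x hx
    have hmaps : Set.MapsTo Ψ (inclWeak E '' Metric.closedBall (0 : E) 1) (Φ '' C) := by
      rintro - ⟨e, he, rfl⟩
      refine ⟨toWeakSpace ℝ F (T e), hTC e he, ?_⟩
      show StrongDual.toWeakDual (inclusionInDoubleDual ℝ F ((toWeakSpace ℝ F).symm
        (toWeakSpace ℝ F (T e)))) = _
      rw [LinearEquiv.symm_apply_apply]
      show _ = StrongDual.toWeakDual (bidualMap T (StrongDual.toWeakDual.symm (inclWeak E e)))
      have : (StrongDual.toWeakDual.symm (inclWeak E e) : StrongDual ℝ (StrongDual ℝ E))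
          = inclusionInDoubleDual ℝ E e := rfl
      rw [this, bidualMap_inclusion]
    have : Ψ (StrongDual.toWeakDual x) ∈ closure (Φ '' C) :=
      map_mem_closure hΨ hmem hmaps
    rw [hKclosed.closure_eq] at this
    obtain ⟨y, hy, hy2⟩ := this
    refine ⟨(toWeakSpace ℝ F).symm y, ?_⟩
    have := congrArg (StrongDual.toWeakDual.symm (R := ℝ)) hy2
    simp only [Φ, Ψ, LinearEquiv.symm_apply_apply] at this
    exact this
  rcases eq_or_ne x 0 with rfl | hx0
  · simp only [map_zero]
    exact Submodule.zero_mem _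
  · have hnx : ‖x‖ ≠ 0 := fun h => hx0 (x.opNorm_zero_iff.mp h)
    have hxnorm : ‖(‖x‖⁻¹ • x : StrongDual ℝ (StrongDual ℝ E))‖ ≤ 1 := by
      rw [norm_smul, norm_inv, norm_norm]
      exact le_of_eq (inv_mul_cancel₀ hnx)
    obtain ⟨y, hy⟩ := key (‖x‖⁻¹ • x) hxnorm
    refine ⟨‖x‖ • y, ?_⟩
    rw [map_smul, hy, map_smul, smul_smul, mul_inv_cancel₀ hnx, one_smul]

/-- The other direction of **Gantmacher's theorem**: if `T**` maps the bidual of `E` into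
the canonical copy of `F`, then `T` is weakly compact. -/
lemma weaklyCompact_of_range (T : E →L[ℝ] F)
    (h : ∀ x : StrongDual ℝ (StrongDual ℝ E), bidualMap T x ∈ LinearMap.range (inclusionInDoubleDual ℝ F).toLinearMap) :
    IsWeaklyCompactOperator T := by
  classical
  have h' : ∀ z : WeakDual ℝ (StrongDual ℝ E), ∃ y : F,
      inclusionInDoubleDual ℝ F y = bidualMap T (StrongDual.toWeakDual.symm z) := fun z =>
    (h (StrongDual.toWeakDual.symm z)).imp (fun y hy => hy)
  let sfun : WeakDual ℝ (StrongDual ℝ E) → WeakSpace ℝ F := fun z =>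
    toWeakSpace ℝ F (Classical.choose (h' z))
  have sspec : ∀ z, inclusionInDoubleDual ℝ F (Classical.choose (h' z))
      = bidualMap T (StrongDual.toWeakDual.symm z) := fun z => Classical.choose_spec (h' z)
  have scont : Continuous sfun := by
    apply WeakBilin.continuous_of_continuous_eval
    intro g
    have heq : (fun z : WeakDual ℝ (StrongDual ℝ E) =>
        (topDualPairing ℝ F).flip (sfun z) g) = fun z => z (g.comp T) := by
      funext z
      have h1 : (topDualPairing ℝ F).flip (sfun z) g = g (Classical.choose (h' z)) := rfl
      have h2 : g (Classical.choose (h' z))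
          = inclusionInDoubleDual ℝ F (Classical.choose (h' z)) g := rfl
      rw [h1, h2, sspec z, bidualMap_apply']
      rfl
    rw [heq]
    exact WeakDual.eval_continuous (g.comp T)
  refine ⟨sfun '' (WeakDual.toStrongDual ⁻¹' Metric.closedBall 0 1),
    ((WeakDual.isCompact_closedBall (𝕜 := ℝ) (E := StrongDual ℝ E) 0 1).image scont), ?_⟩
  intro e he
  have hz : (StrongDual.toWeakDual (inclusionInDoubleDual ℝ E e)) ∈
      (WeakDual.toStrongDual ⁻¹' Metric.closedBall (0:StrongDual ℝ (StrongDual ℝ E)) 1 :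
        Set (WeakDual ℝ (StrongDual ℝ E))) := by
    simp only [Set.mem_preimage, Metric.mem_closedBall, dist_zero_right]
    have : ‖inclusionInDoubleDual ℝ E e‖ ≤ ‖e‖ := double_dual_bound ℝ E e
    have he' : ‖e‖ ≤ 1 := by simpa [dist_zero_right] using he
    exact le_trans this he'
  refine ⟨StrongDual.toWeakDual (inclusionInDoubleDual ℝ E e), hz, ?_⟩
  -- sfun z = toWeakSpace (T e)
  have hinj : Function.Injective (inclusionInDoubleDual ℝ F) :=
    (inclusionInDoubleDualLi ℝ (E := F)).injective
  have : Classical.choose (h' (StrongDual.toWeakDual (inclusionInDoubleDual ℝ E e))) = T e := by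
    apply hinj
    rw [sspec]
    have : (StrongDual.toWeakDual.symm (StrongDual.toWeakDual (inclusionInDoubleDual ℝ E e)))
        = inclusionInDoubleDual ℝ E e := LinearEquiv.symm_apply_apply _ _
    rw [this, bidualMap_inclusion]
  simp only [sfun, this]

end Auxiliary

set_option maxHeartbeats 1000000 in
/-- The residuum operator `T^co : E**/E → F**/F`,
`x + E ↦ T**(x) + F`, is well defined, linear and bounded with `‖T^co‖ ≤ ‖T‖`, and
`T^co = 0` iff `T` is weakly compact (Gantmacher). -/
theorem residuum_operator_exists_unique
    {E F : Type*} [NormedAddCommGroup E] [NormedSpace ℝ E] [CompleteSpace E]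
    [NormedAddCommGroup F] [NormedSpace ℝ F] [CompleteSpace F]
    (T : E →L[ℝ] F) :
    ∃! Tco : (StrongDual ℝ (StrongDual ℝ E) ⧸ LinearMap.range (inclusionInDoubleDual ℝ E).toLinearMap) →L[ℝ]
        (StrongDual ℝ (StrongDual ℝ F) ⧸ LinearMap.range (inclusionInDoubleDual ℝ F).toLinearMap),
      (∀ x : StrongDual ℝ (StrongDual ℝ E),
        Tco (Submodule.Quotient.mk x) = Submodule.Quotient.mk (bidualMap T x)) ∧
      ‖Tco‖ ≤ ‖T‖ ∧
      (Tco = 0 ↔ IsWeaklyCompactOperator T) := by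
  classical
  set NE := LinearMap.range (inclusionInDoubleDual ℝ E).toLinearMap with hNE
  set NF := LinearMap.range (inclusionInDoubleDual ℝ F).toLinearMap with hNF
  -- the underlying linear map
  have hle : NE ≤ LinearMap.ker (NF.mkQ.comp (bidualMap T).toLinearMap) := by
    rintro - ⟨e, rfl⟩
    simp only [LinearMap.mem_ker, LinearMap.comp_apply, ContinuousLinearMap.coe_coe]
    rw [bidualMap_inclusion]
    simp only [Submodule.mkQ_apply, Submodule.Quotient.mk_eq_zero]
    exact ⟨T e, rfl⟩
  set f₀ : (StrongDual ℝ (StrongDual ℝ E) ⧸ NE) →ₗ[ℝ] (StrongDual ℝ (StrongDual ℝ F) ⧸ NF) :=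
    NE.liftQ (NF.mkQ.comp (bidualMap T).toLinearMap) hle with hf₀
  have hf₀mk : ∀ x : StrongDual ℝ (StrongDual ℝ E),
      f₀ (Submodule.Quotient.mk x) = Submodule.Quotient.mk (bidualMap T x) := fun x =>
    Submodule.liftQ_apply _ _ _
  have hbound : ∀ q : StrongDual ℝ (StrongDual ℝ E) ⧸ NE, ‖f₀ q‖ ≤ ‖T‖ * ‖q‖ := by
    intro q
    refine le_of_forall_pos_le_add fun ε hε => ?_
    have hδ : (0:ℝ) < ε / (‖T‖ + 1) := by positivity
    obtain ⟨m, hm, hmlt⟩ := Submodule.Quotient.norm_mk_lt q hδ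
    have hq : f₀ q = Submodule.Quotient.mk (bidualMap T m) := by rw [← hm]; exact hf₀mk m
    rw [hq]
    calc ‖(Submodule.Quotient.mk (bidualMap T m) : StrongDual ℝ (StrongDual ℝ F) ⧸ NF)‖
        ≤ ‖bidualMap T m‖ := Submodule.Quotient.norm_mk_le _ _
    _ ≤ ‖T‖ * ‖m‖ := bidualMap_norm_le T m
    _ ≤ ‖T‖ * (‖q‖ + ε / (‖T‖ + 1)) := by
        have h2 : ‖m‖ ≤ ‖q‖ + ε / (‖T‖ + 1) := hmlt.le
        nlinarith [norm_nonneg T, norm_nonneg m]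
    _ = ‖T‖ * ‖q‖ + ‖T‖ * (ε / (‖T‖ + 1)) := by ring
    _ ≤ ‖T‖ * ‖q‖ + ε := by
        have h1 : ‖T‖ * (ε / (‖T‖ + 1)) ≤ ε := by
          rw [mul_div_assoc']
          rw [div_le_iff₀ (by positivity)]
          nlinarith [norm_nonneg T]
        linarith
  set Tco : (StrongDual ℝ (StrongDual ℝ E) ⧸ NE) →L[ℝ] (StrongDual ℝ (StrongDual ℝ F) ⧸ NF) :=
    f₀.mkContinuous ‖T‖ hbound with hTco
  have hTcomk : ∀ x : StrongDual ℝ (StrongDual ℝ E),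
      Tco (Submodule.Quotient.mk x) = Submodule.Quotient.mk (bidualMap T x) := hf₀mk
  refine ⟨Tco, ⟨hTcomk, f₀.mkContinuous_norm_le (norm_nonneg T) hbound, ?_⟩, ?_⟩
  · constructor
    · intro h0
      apply weaklyCompact_of_range
      intro x
      have := hTcomk x
      rw [h0] at this
      simp only [ContinuousLinearMap.zero_apply] at this
      rw [← Submodule.Quotient.mk_eq_zero]
      exact this.symm
    · intro hT
      ext q
      obtain ⟨x, rfl⟩ := Submodule.Quotient.mk_surjective NE q
      rw [hTcomk x]
      simp only [ContinuousLinearMap.zero_apply]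
      rw [Submodule.Quotient.mk_eq_zero]
      exact range_of_weaklyCompact T hT x
  · rintro Tco' ⟨h1, -, -⟩
    ext q
    obtain ⟨x, rfl⟩ := Submodule.Quotient.mk_surjective NE q
    rw [h1 x, hTcomk x]
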